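/- A commutative pointed monoid A is finitely generated (there is a finite subset X ⊆ A such that every nonzero element of A is a finite, possibly empty, product of elements of X) if and only if the congruences on A satisfy the ascending chain condition: every increasing sequence c₁ ≤ c₂ ≤ ⋯ of congruences on A is eventually constant. -/

import Mathlib

open Pointwise

namespace MonoidFGACC


section Dir2

variable {T : Type*} [CommMonoid T]

/-- ACC on congruences, as in the theorem statement. -/
def ConACC (T : Type*) [CommMonoid T] : Prop :=
  ∀ c : ℕ → Con T, Monotone c → ∃ N, ∀ m, N ≤ m → c m = c N

theorem ConACC.no_ascent (hacc : ConACC T) (f : ℕ → Con T)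
    (hmono : ∀ n, f n ≤ f (n + 1)) (hne : ∀ n, f n ≠ f (n + 1)) : False := by
  obtain ⟨N, hN⟩ := hacc f (monotone_nat_of_le_succ hmono)
  exact hne N ((hN (N + 1) (Nat.le_succ N)).symm ▸ rfl)

/-- The Rees congruence attached to an ideal. -/
def reesCon (I : Set T) (hI : ∀ ⦃x⦄, x ∈ I → ∀ t, t * x ∈ I) : Con T where
  r x y := x = y ∨ (x ∈ I ∧ y ∈ I)
  iseqv := ⟨fun _ => Or.inl rfl,
    fun h => h.elim (fun h => Or.inl h.symm) fun h => Or.inr ⟨h.2, h.1⟩,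
    fun h h' => by
      rcases h with rfl | h
      · exact h'
      · rcases h' with rfl | h'
        · exact Or.inr h
        · exact Or.inr ⟨h.1, h'.2⟩⟩
  mul' {w x y z} h h' := by
    rcases h with rfl | h
    · rcases h' with rfl | h'
      · exact Or.inl rfl
      · exact Or.inr ⟨hI h'.1 w, hI h'.2 w⟩
    · rcases h' with rfl | h'
      · refine Or.inr ⟨?_, ?_⟩
        · rw [mul_comm]; exact hI h.1 y
        · rw [mul_comm]; exact hI h.2 y
      · exact Or.inr ⟨hI h'.1 w, hI h'.2 x⟩

theorem reesCon_mono {I J : Set T} (hI : ∀ ⦃x⦄, x ∈ I → ∀ t, t * x ∈ I)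
    (hJ : ∀ ⦃x⦄, x ∈ J → ∀ t, t * x ∈ J) (hIJ : I ⊆ J) :
    reesCon I hI ≤ reesCon J hJ := by
  rw [Con.le_def]
  rintro x y (rfl | h)
  · exact Or.inl rfl
  · exact Or.inr ⟨hIJ h.1, hIJ h.2⟩

theorem reesCon_apply {I : Set T} (hI : ∀ ⦃x⦄, x ∈ I → ∀ t, t * x ∈ I) (x y : T) :
    reesCon I hI x y ↔ x = y ∨ (x ∈ I ∧ y ∈ I) := Iff.rfl


/-- congruence attached to a subgroup of the units -/
def unitsCon (S : Subgroup Tˣ) : Con T where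
  r x y := ∃ u ∈ S, x = y * (u : Tˣ)
  iseqv := ⟨fun x => ⟨1, S.one_mem, by simp⟩,
    fun {x y} h => by
      obtain ⟨u, hu, rfl⟩ := h
      exact ⟨u⁻¹, S.inv_mem hu, by simp [mul_assoc]⟩,
    fun {x y z} h h' => by
      obtain ⟨u, hu, rfl⟩ := h
      obtain ⟨v, hv, rfl⟩ := h'
      exact ⟨v * u, S.mul_mem hv hu, by simp [mul_assoc]⟩⟩
  mul' {w x y z} h h' := by
    obtain ⟨u, hu, rfl⟩ := h
    obtain ⟨v, hv, rfl⟩ := h'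
    refine ⟨u * v, S.mul_mem hu hv, ?_⟩
    push_cast
    exact mul_mul_mul_comm x (u : T) z (v : T)

theorem unitsCon_mono {S S' : Subgroup Tˣ} (h : S ≤ S') : unitsCon S ≤ unitsCon S' := by
  rw [Con.le_def]
  rintro x y ⟨u, hu, rfl⟩
  exact ⟨u, h hu, rfl⟩

theorem unitsCon_one {S : Subgroup Tˣ} {u : Tˣ} (h : unitsCon S (↑u) 1) : u ∈ S := by
  obtain ⟨v, hv, hveq⟩ := h
  rw [one_mul] at hveq
  have : u = v := Units.ext hveq
  rwa [this]

/-- Under ACC, there is a finite set whose closure contains all units. -/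
theorem units_gen (hacc : ConACC T) :
    ∃ E : Finset T, ∀ x : T, IsUnit x → x ∈ Submonoid.closure (E : Set T) := by
  classical
  by_contra hcon
  push_neg at hcon
  -- every finite subset of Tˣ fails to generate the unit group
  have step : ∀ V : Finset Tˣ, ∃ u : Tˣ, u ∉ Subgroup.closure (V : Set Tˣ) := by
    intro V
    set E : Finset T := (V ∪ V⁻¹).image (⇑(Units.coeHom T)) with hE
    obtain ⟨x, hx, hxE⟩ := hcon E
    refine ⟨hx.unit, fun hmem => hxE ?_⟩
    have h1 : hx.unit ∈ Submonoid.closure ((V : Set Tˣ) ∪ (V : Set Tˣ)⁻¹) := by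
      have := Subgroup.closure_toSubmonoid (V : Set Tˣ)
      have h2 : hx.unit ∈ (Subgroup.closure (V : Set Tˣ)).toSubmonoid := hmem
      rwa [this] at h2
    have h3 : (Units.coeHom T) hx.unit ∈
        (Submonoid.closure ((V : Set Tˣ) ∪ (V : Set Tˣ)⁻¹)).map (Units.coeHom T) :=
      Submonoid.mem_map_of_mem _ h1
    rw [MonoidHom.map_mclosure] at h3
    have h4 : (Units.coeHom T) '' ((V : Set Tˣ) ∪ (V : Set Tˣ)⁻¹) ⊆ (E : Set T) := by
      rintro t ⟨u, hu, rfl⟩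
      have hu' : u ∈ V ∪ V⁻¹ := by simpa using hu
      have hm : (Units.coeHom T) u ∈ (V ∪ V⁻¹).image (⇑(Units.coeHom T)) :=
        Finset.mem_image_of_mem (⇑(Units.coeHom T)) hu'
      rw [hE]
      exact Finset.mem_coe.2 hm
    have h5 : x ∈ Submonoid.closure (E : Set T) := by
      have := Submonoid.closure_mono h4 h3
      simpa using this
    exact h5
  choose F hF using step
  -- build a strictly increasing chain of subgroups
  set V : ℕ → Finset Tˣ := fun n => Nat.rec (∅ : Finset Tˣ) (fun _ W => insert (F W) W) n with hV
  have hVmono : ∀ n, V n ⊆ V (n + 1) := fun n => Finset.subset_insert _ _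
  have hmem : ∀ n, F (V n) ∈ V (n + 1) := fun n => Finset.mem_insert_self _ _
  have hchain : ∀ n, unitsCon (Subgroup.closure ((V n : Finset Tˣ) : Set Tˣ)) ≤
      unitsCon (Subgroup.closure ((V (n + 1) : Finset Tˣ) : Set Tˣ)) := by
    intro n
    apply unitsCon_mono
    apply Subgroup.closure_mono
    exact Finset.coe_subset.2 (hVmono n)
  refine ConACC.no_ascent hacc _ hchain fun n h => ?_
  have h1 : unitsCon (Subgroup.closure ((V (n+1) : Finset Tˣ) : Set Tˣ)) (↑(F (V n))) 1 :=
    ⟨F (V n), Subgroup.subset_closure (Finset.mem_coe.2 (hmem n)), (one_mul _).symm⟩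
  rw [← h] at h1
  exact hF (V n) (unitsCon_one h1)

end Dir2

section More
variable {T : Type*} [CommMonoid T]

/-- strict divisibility -/
def SDvd (a b : T) : Prop := a ∣ b ∧ ¬ b ∣ a

theorem dvd_ideal : ∀ (a : T), ∀ ⦃x⦄, x ∈ {y : T | a ∣ y} → ∀ t, t * x ∈ {y : T | a ∣ y} :=
  fun _ _ hx t => hx.mul_left t

theorem wf_sdvd (hacc : ConACC T) : WellFounded (SDvd (T := T)) := by
  have hwf : WellFounded ((· > ·) : Con T → Con T → Prop) :=
    (wellFoundedGT_iff_monotone_chain_condition.2 (fun a => by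
      obtain ⟨N, hN⟩ := hacc a a.mono
      exact ⟨N, fun m hm => (hN m hm).symm⟩)).wf
  have key : ∀ a b : T, SDvd a b → (reesCon {y : T | a ∣ y} (dvd_ideal a)) >
      (reesCon {y : T | b ∣ y} (dvd_ideal b)) := by
    intro a b hs
    obtain ⟨hab, hnba⟩ := hs
    refine lt_of_le_not_ge (reesCon_mono _ _ (fun y hy => hab.trans hy)) ?_
    intro hle
    have h1 : reesCon {y : T | a ∣ y} (dvd_ideal a) b a := Or.inr ⟨hab, dvd_refl a⟩
    have h2 := hle h1
    rcases h2 with heq | ⟨-, h2⟩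
    · exact hnba (heq ▸ dvd_refl b)
    · exact hnba h2
  exact Subrelation.wf (fun {a b} h => key a b h) (InvImage.wf _ hwf)

/-- There are finitely many irreducibles up to mutual divisibility. -/
theorem irred_classes (hacc : ConACC T) :
    ∃ P : Finset T, ∀ x : T, Irreducible x → ∃ p ∈ P, x ∣ p ∧ p ∣ x := by
  classical
  by_contra hcon
  push_neg at hcon
  -- hcon : ∀ P, ∃ x, Irreducible x ∧ ∀ p ∈ P, ¬(x ∣ p ∧ p ∣ x)
  choose F hF1 hF2 using hcon
  set seq : ℕ → Finset T := fun n => Nat.rec ({F ∅} : Finset T) (fun _ W => insert (F W) W) n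
    with hseq
  have hseq0 : seq 0 = {F ∅} := rfl
  have hseqS : ∀ n, seq (n + 1) = insert (F (seq n)) (seq n) := fun _ => rfl
  have hmono : ∀ n, seq n ⊆ seq (n + 1) := fun n => by rw [hseqS]; exact Finset.subset_insert _ _
  have hmono' : ∀ m n, m ≤ n → seq m ⊆ seq n := by
    intro m n hmn
    induction hmn with
    | refl => exact subset_rfl
    | step h ih => exact ih.trans (hmono _)
  have hirr : ∀ n, ∀ p ∈ seq n, Irreducible p := by
    intro n
    induction n with
    | zero =>
      intro p hp
      rw [hseq0, Finset.mem_singleton] at hp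
      exact hp ▸ hF1 ∅
    | succ n ih =>
      intro p hp
      rw [hseqS] at hp
      rcases Finset.mem_insert.1 hp with rfl | hp
      · exact hF1 _
      · exact ih p hp
  -- the ideals
  set Red : Set T := {x | ¬IsUnit x ∧ ∃ a b, ¬IsUnit a ∧ ¬IsUnit b ∧ x = a * b} with hRed
  set K : ℕ → Set T := fun n => Red ∪ {x | ∃ p ∈ seq (n + 1), x ∣ p ∧ p ∣ x} with hK
  have hKideal : ∀ n, ∀ ⦃x⦄, x ∈ K n → ∀ t, t * x ∈ K n := by
    intro n x hx t
    have hxnu : ¬ IsUnit x := by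
      rcases hx with hx | ⟨p, hp, _, hpx⟩
      · exact hx.1
      · intro hxu
        exact (hirr (n+1) p hp).not_isUnit (isUnit_of_dvd_unit hpx hxu)
    have htxnu : ¬ IsUnit (t * x) := fun h => hxnu (isUnit_of_dvd_unit ⟨t, mul_comm t x⟩ h)
    rcases hx with ⟨_, a, b, ha, hb, rfl⟩ | ⟨p, hp, hxp, hpx⟩
    · exact Or.inl ⟨htxnu, t * a, b, fun h => ha (isUnit_of_dvd_unit ⟨t, mul_comm t a⟩ h), hb,
        (mul_assoc t a b).symm⟩
    · by_cases ht : IsUnit t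
      · obtain ⟨u, rfl⟩ := ht
        refine Or.inr ⟨p, hp, dvd_trans ?_ hxp, hpx.trans (dvd_mul_left x (↑u : T))⟩
        exact ⟨(↑u⁻¹ : T), by rw [mul_comm (↑u : T) x, mul_assoc]; simp⟩
      · exact Or.inl ⟨htxnu, t, x, ht, hxnu, rfl⟩
  have hKmono : ∀ n, K n ⊆ K (n + 1) := by
    intro n
    apply Set.union_subset_union_right
    rintro x ⟨p, hp, h⟩
    exact ⟨p, hmono (n+1) hp, h⟩
  -- strictness witnesses
  have hnotin : ∀ n, F (seq (n + 1)) ∉ K n := by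
    intro n hmem
    rcases hmem with ⟨hnu, a, b, ha, hb, heq⟩ | ⟨p, hp, h⟩
    · rcases (hF1 (seq (n + 1))).isUnit_or_isUnit heq with h | h
      · exact ha h
      · exact hb h
    · exact hF2 (seq (n + 1)) p hp h.1 h.2
  have hin : ∀ n, F (seq (n + 1)) ∈ K (n + 1) := by
    intro n
    refine Or.inr ⟨F (seq (n + 1)), ?_, dvd_refl _, dvd_refl _⟩
    rw [hseqS (n+1)]
    exact Finset.mem_insert_self _ _
  have hbase : ∀ n, F ∅ ∈ K n := by
    intro n
    refine Or.inr ⟨F ∅, hmono' 0 (n+1) (Nat.zero_le _) ?_, dvd_refl _, dvd_refl _⟩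
    rw [hseq0]
    exact Finset.mem_singleton_self _
  refine ConACC.no_ascent hacc (fun n => reesCon (K n) (hKideal n))
    (fun n => reesCon_mono _ _ (hKmono n)) (fun n heq => ?_)
  have hrel : reesCon (K (n+1)) (hKideal (n+1)) (F (seq (n + 1))) (F ∅) :=
    Or.inr ⟨hin n, hbase (n+1)⟩
  have heq' : reesCon (K n) (hKideal n) = reesCon (K (n+1)) (hKideal (n+1)) := heq
  rw [← heq'] at hrel
  rcases hrel with hrel | ⟨hrel, _⟩
  · exact hnotin n (hrel ▸ hbase n)
  · exact hnotin n hrel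

end More

section Phi
variable {T : Type*} [CommMonoid T]

/-- elements with a nontrivial stabilizer -/
def PhiSet (T : Type*) [CommMonoid T] : Set T := {x | ∃ m, ¬IsUnit m ∧ x * m = x}

theorem PhiSet_ideal : ∀ ⦃x : T⦄, x ∈ PhiSet T → ∀ t, t * x ∈ PhiSet T := by
  rintro x ⟨m, hm, hxm⟩ t
  exact ⟨m, hm, by rw [mul_assoc, hxm]⟩

theorem cover (hacc : ConACC T) (E P : Finset T)
    (hE : ∀ x : T, IsUnit x → x ∈ Submonoid.closure (E : Set T))
    (hP : ∀ x : T, Irreducible x → ∃ p ∈ P, x ∣ p ∧ p ∣ x) :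
    ∀ x : T, x ∈ Submonoid.closure ((E : Set T) ∪ (P : Set T)) ∨ x ∈ PhiSet T := by
  have hEsub : (E : Set T) ⊆ (E : Set T) ∪ (P : Set T) := Set.subset_union_left
  have hPsub : (P : Set T) ⊆ (E : Set T) ∪ (P : Set T) := Set.subset_union_right
  intro x
  induction x using (wf_sdvd hacc).induction with
  | _ x IH =>
  by_cases hu : IsUnit x
  · exact Or.inl (Submonoid.closure_mono hEsub (hE x hu))
  by_cases hirr : Irreducible x
  · obtain ⟨p, hp, hxp, hpx⟩ := hP x hirr
    obtain ⟨c, hc⟩ := hpx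
    rcases hirr.isUnit_or_isUnit hc with hup | huc
    · exact absurd (isUnit_of_dvd_unit hxp hup) hu
    · refine Or.inl ?_
      rw [hc]
      exact mul_mem (Submonoid.subset_closure (hPsub (Finset.mem_coe.2 hp)))
        (Submonoid.closure_mono hEsub (hE c huc))
  · -- x is a nonunit, reducible
    have hex : ∃ a b, x = a * b ∧ ¬IsUnit a ∧ ¬IsUnit b := by
      rw [irreducible_iff] at hirr
      push_neg at hirr
      obtain ⟨a, b, hab, ha, hb⟩ := hirr hu
      exact ⟨a, b, hab, ha, hb⟩
    obtain ⟨a, b, hab, ha, hb⟩ := hex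
    by_cases hxa : x ∣ a
    · obtain ⟨c, hc⟩ := hxa
      refine Or.inr ⟨c * b, ?_, ?_⟩
      · intro h
        exact hb (isUnit_of_dvd_unit (dvd_mul_left b c) h)
      · rw [← mul_assoc, ← hc, ← hab]
    by_cases hxb : x ∣ b
    · obtain ⟨c, hc⟩ := hxb
      refine Or.inr ⟨c * a, ?_, ?_⟩
      · intro h
        exact ha (isUnit_of_dvd_unit (dvd_mul_left a c) h)
      · rw [← mul_assoc, ← hc, mul_comm b a, ← hab]
    · have hsa : SDvd a x := ⟨⟨b, hab⟩, hxa⟩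
      have hsb : SDvd b x := ⟨⟨a, by rw [hab, mul_comm]⟩, hxb⟩
      rcases IH a hsa with hca | hpa
      · rcases IH b hsb with hcb | hpb
        · exact Or.inl (hab ▸ mul_mem hca hcb)
        · refine Or.inr ?_
          rw [hab]
          exact PhiSet_ideal hpb a
      · refine Or.inr ?_
        rw [hab, mul_comm a b]
        exact PhiSet_ideal hpa b

theorem PhiSet_fg (hacc : ConACC T) (hne : (PhiSet T).Nonempty) :
    ∃ A : Finset T, (∀ a ∈ A, a ∈ PhiSet T) ∧ ∀ x ∈ PhiSet T, ∃ a ∈ A, a ∣ x := by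
  classical
  by_contra hcon
  push_neg at hcon
  -- hcon : ∀ A, (∀ a ∈ A, a ∈ PhiSet T) → ∃ x ∈ PhiSet T, ∀ a ∈ A, ¬ a ∣ x
  set F : Finset T → T := fun A =>
    if h : ∀ a ∈ A, a ∈ PhiSet T then (hcon A h).choose else hne.choose with hFdef
  have hFPhi : ∀ A, F A ∈ PhiSet T := by
    intro A
    rw [hFdef]
    by_cases h : ∀ a ∈ A, a ∈ PhiSet T
    · simp only [dif_pos h]
      exact (hcon A h).choose_spec.1
    · simp only [dif_neg h]
      exact hne.choose_spec
  have hFnd : ∀ A, (∀ a ∈ A, a ∈ PhiSet T) → ∀ a ∈ A, ¬ a ∣ F A := by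
    intro A h
    have := (hcon A h).choose_spec.2
    rw [hFdef]
    simpa only [dif_pos h] using this
  set seq : ℕ → Finset T := fun n => Nat.rec ({F ∅} : Finset T) (fun _ W => insert (F W) W) n
    with hseq
  have hseq0 : seq 0 = {F ∅} := rfl
  have hseqS : ∀ n, seq (n + 1) = insert (F (seq n)) (seq n) := fun _ => rfl
  have hmono : ∀ n, seq n ⊆ seq (n + 1) := fun n => by
    rw [hseqS]; exact Finset.subset_insert _ _
  have hmono' : ∀ m n, m ≤ n → seq m ⊆ seq n := by
    intro m n hmn
    induction hmn with
    | refl => exact subset_rfl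
    | step h ih => exact ih.trans (hmono _)
  have hall : ∀ n, ∀ a ∈ seq n, a ∈ PhiSet T := by
    intro n
    induction n with
    | zero =>
      intro a hazero
      rw [hseq0, Finset.mem_singleton] at hazero
      exact hazero ▸ hFPhi ∅
    | succ n ih =>
      intro a ha
      rw [hseqS] at ha
      rcases Finset.mem_insert.1 ha with rfl | ha
      · exact hFPhi _
      · exact ih a ha
  set I : ℕ → Set T := fun n => {x | ∃ a ∈ seq n, a ∣ x} with hI
  have hIideal : ∀ n, ∀ ⦃x : T⦄, x ∈ I n → ∀ t, t * x ∈ I n := by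
    rintro n x ⟨a, ha, hax⟩ t
    exact ⟨a, ha, hax.mul_left t⟩
  have hImono : ∀ n, I n ⊆ I (n + 1) := by
    rintro n x ⟨a, ha, hax⟩
    exact ⟨a, hmono n ha, hax⟩
  have hbase : ∀ n, F ∅ ∈ I n := by
    intro n
    refine ⟨F ∅, hmono' 0 n (Nat.zero_le _) ?_, dvd_refl _⟩
    rw [hseq0]; exact Finset.mem_singleton_self _
  have hnotin : ∀ n, F (seq n) ∉ I n := by
    rintro n ⟨a, ha, hax⟩
    exact hFnd (seq n) (hall n) a ha hax
  have hin : ∀ n, F (seq n) ∈ I (n + 1) := by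
    intro n
    refine ⟨F (seq n), ?_, dvd_refl _⟩
    rw [hseqS]; exact Finset.mem_insert_self _ _
  refine ConACC.no_ascent hacc (fun n => reesCon (I n) (hIideal n))
    (fun n => reesCon_mono _ _ (hImono n)) (fun n heq => ?_)
  have hrel : reesCon (I (n+1)) (hIideal (n+1)) (F (seq n)) (F ∅) :=
    Or.inr ⟨hin n, hbase (n+1)⟩
  have heq' : reesCon (I n) (hIideal n) = reesCon (I (n+1)) (hIideal (n+1)) := heq
  rw [← heq'] at hrel
  rcases hrel with hrel | ⟨hrel, -⟩
  · exact hnotin n (hrel ▸ hbase n)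
  · exact hnotin n hrel

/-- the congruence `x ~ y iff x m^i = y m^j` -/
def stabCon (m : T) : Con T where
  r a b := ∃ i j : ℕ, a * m ^ i = b * m ^ j
  iseqv := by
    refine ⟨fun a => ⟨0, 0, rfl⟩, ?_, ?_⟩
    · rintro a b ⟨i, j, h⟩
      exact ⟨j, i, h.symm⟩
    · rintro a b c ⟨i, j, h⟩ ⟨k, l, h'⟩
      refine ⟨i + k, l + j, ?_⟩
      rw [pow_add, ← mul_assoc, h, mul_assoc, ← pow_add, Nat.add_comm j k, pow_add,
        ← mul_assoc, h', mul_assoc, ← pow_add, Nat.add_comm l j]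
  mul' := by
    rintro a b c d ⟨i, j, h⟩ ⟨k, l, h'⟩
    refine ⟨i + k, j + l, ?_⟩
    rw [pow_add, pow_add, mul_mul_mul_comm a c, h, h', mul_mul_mul_comm b (m ^ j)]

theorem fix_gen (m : T) (S : Finset T)
    (hS : ∀ x : T, ∃ w ∈ Submonoid.closure (S : Set T),
      (conGen fun a b => a = m ∧ b = 1) x w) :
    ∀ x : T, x * m = x → x ∈ Submonoid.closure (insert m (S : Set T)) := by
  intro x hxm
  obtain ⟨w, hw, hrel⟩ := hS x
  have hle : (conGen fun a b => a = m ∧ b = 1) ≤ stabCon m := by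
    apply Con.conGen_le.2
    rintro a b ⟨rfl, rfl⟩
    exact ⟨0, 1, by rw [pow_zero, pow_one, mul_one, one_mul]⟩
  obtain ⟨i, j, hij⟩ := hle hrel
  have hpow : ∀ k : ℕ, x * m ^ k = x := by
    intro k
    induction k with
    | zero => rw [pow_zero, mul_one]
    | succ k ih => rw [pow_succ, ← mul_assoc, ih, hxm]
  rw [hpow i] at hij
  rw [hij]
  have hmm : m ∈ Submonoid.closure (insert m (S : Set T)) :=
    Submonoid.subset_closure (Set.mem_insert _ _)
  have hsub : (S : Set T) ⊆ insert m (S : Set T) := Set.subset_insert _ _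
  exact mul_mem (Submonoid.closure_mono hsub hw) (pow_mem hmm j)

end Phi

section KeyLemma
variable {T : Type*} [CommMonoid T]

theorem key_lemma (hacc : ConACC T)
    (hq : ∀ d : Con T, d ≠ ⊥ →
      ∃ S : Finset T, ∀ x : T, ∃ w ∈ Submonoid.closure (S : Set T), d x w) :
    ∃ S : Finset T, Submonoid.closure (S : Set T) = ⊤ := by
  classical
  obtain ⟨E, hE⟩ := units_gen hacc
  obtain ⟨P, hP⟩ := irred_classes hacc
  by_cases hphi : (PhiSet T).Nonempty
  · obtain ⟨A, hA1, hA2⟩ := PhiSet_fg hacc hphi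
    have hm : ∀ a : {y // y ∈ A}, ∃ mm : T, ¬IsUnit mm ∧ (a : T) * mm = a :=
      fun a => hA1 a a.2
    choose mf hmf1 hmf2 using hm
    have hcg : ∀ a : {y // y ∈ A}, (conGen fun p q => p = mf a ∧ q = 1) ≠ ⊥ := by
      intro a hbot
      have h1 : (conGen fun p q => p = mf a ∧ q = 1) (mf a) 1 := ConGen.Rel.of _ _ ⟨rfl, rfl⟩
      rw [hbot] at h1
      have h2 : mf a = 1 := h1
      exact hmf1 a (h2 ▸ isUnit_one)
    have hSa : ∀ a : {y // y ∈ A}, ∃ S : Finset T, ∀ x : T,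
        ∃ w ∈ Submonoid.closure (S : Set T), (conGen fun p q => p = mf a ∧ q = 1) x w :=
      fun a => hq _ (hcg a)
    choose Sf hSf using hSa
    refine ⟨(E ∪ P) ∪ A.attach.biUnion (fun a => insert (mf a) (Sf a)), ?_⟩
    rw [Submonoid.eq_top_iff']
    intro x
    rcases cover hacc E P hE hP x with h | h
    · refine Submonoid.closure_mono ?_ h
      intro z hz
      rcases hz with hz | hz
      · exact Finset.mem_coe.2 (Finset.mem_union_left _
          (Finset.mem_union_left _ (Finset.mem_coe.1 hz)))
      · exact Finset.mem_coe.2 (Finset.mem_union_left _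
          (Finset.mem_union_right _ (Finset.mem_coe.1 hz)))
    · obtain ⟨a, haA, t, ht⟩ := hA2 x h
      have hxm : x * mf ⟨a, haA⟩ = x := by
        rw [ht, mul_assoc, mul_comm t (mf ⟨a, haA⟩), ← mul_assoc, hmf2 ⟨a, haA⟩]
      have hx := fix_gen (mf ⟨a, haA⟩) (Sf ⟨a, haA⟩) (hSf _) x hxm
      refine Submonoid.closure_mono ?_ hx
      intro z hz
      have hz' : z ∈ ((insert (mf ⟨a, haA⟩) (Sf ⟨a, haA⟩) : Finset T) : Set T) := by
        rw [Finset.coe_insert]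
        exact hz
      refine Finset.mem_coe.2 (Finset.mem_union_right _ ?_)
      exact Finset.mem_biUnion.2 ⟨⟨a, haA⟩, Finset.mem_attach _ _, Finset.mem_coe.1 hz'⟩
  · refine ⟨E ∪ P, ?_⟩
    rw [Submonoid.eq_top_iff']
    intro x
    rcases cover hacc E P hE hP x with h | h
    · refine Submonoid.closure_mono ?_ h
      intro z hz
      rcases hz with hz | hz
      · exact Finset.mem_coe.2 (Finset.mem_union_left _ (Finset.mem_coe.1 hz))
      · exact Finset.mem_coe.2 (Finset.mem_union_right _ (Finset.mem_coe.1 hz))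
    · exact absurd ⟨x, h⟩ hphi

end KeyLemma

section Criminal
variable {M : Type*} [CommMonoid M]

/-- pull back a congruence on the quotient -/
def pullCon (c : Con M) (d : Con c.Quotient) : Con M where
  r x y := d (x : c.Quotient) (y : c.Quotient)
  iseqv := ⟨fun x => d.refl _, fun h => d.symm h, fun h h' => d.trans h h'⟩
  mul' {w x y z} h h' := by
    show d ↑(w * y) ↑(x * z)
    rw [Con.coe_mul, Con.coe_mul]
    exact d.mul h h'

theorem dir2 (hacc : ConACC M) : ∃ S : Finset M, Submonoid.closure (S : Set M) = ⊤ := by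
  classical
  by_contra hnot
  push_neg at hnot
  set C : Set (Con M) :=
    {c | ∀ S : Finset M, ¬ ∀ x : M, ∃ w ∈ Submonoid.closure (S : Set M), c x w} with hC
  have hbot : (⊥ : Con M) ∈ C := by
    intro S hS
    apply hnot S
    rw [Submonoid.eq_top_iff']
    intro x
    obtain ⟨w, hw, hxw⟩ := hS x
    have hxw' : x = w := hxw
    exact hxw' ▸ hw
  have hwf : WellFounded ((· > ·) : Con M → Con M → Prop) :=
    (wellFoundedGT_iff_monotone_chain_condition.2 (fun a => by
      obtain ⟨N, hN⟩ := hacc a a.mono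
      exact ⟨N, fun m hm => (hN m hm).symm⟩)).wf
  obtain ⟨c0, hc0, hmax⟩ := hwf.has_min C ⟨⊥, hbot⟩
  -- ACC for the quotient
  have haccT : ConACC c0.Quotient := by
    intro d hd
    have hmono : Monotone fun n => pullCon c0 (d n) := by
      intro a b hab x y hxy
      exact hd hab hxy
    obtain ⟨N, hN⟩ := hacc _ hmono
    refine ⟨N, fun m hm => ?_⟩
    apply Con.ext
    intro q r
    refine Con.induction_on₂ q r fun x y => ?_
    have h1 : pullCon c0 (d m) = pullCon c0 (d N) := hN m hm
    constructor
    · intro h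
      have : pullCon c0 (d m) x y := h
      rw [h1] at this
      exact this
    · intro h
      have : pullCon c0 (d N) x y := h
      rw [← h1] at this
      exact this
  -- every nontrivial congruence on the quotient has f.g. quotient data
  have hq : ∀ d : Con c0.Quotient, d ≠ ⊥ →
      ∃ S : Finset c0.Quotient, ∀ x : c0.Quotient,
        ∃ w ∈ Submonoid.closure (S : Set c0.Quotient), d x w := by
    intro d hd
    -- pull back is strictly bigger than c0
    have hle : c0 ≤ pullCon c0 d := by
      intro x y hxy
      have hxy' : (x : c0.Quotient) = y := (Con.eq c0).2 hxy
      show d ↑x ↑y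
      rw [hxy']
      exact d.refl _
    have hne : pullCon c0 d ≠ c0 := by
      intro heq
      apply hd
      apply Con.ext
      intro q r
      refine Con.induction_on₂ q r fun x y => ?_
      constructor
      · intro h
        have h2 : pullCon c0 d x y := h
        rw [heq] at h2
        exact (Con.eq c0).2 h2
      · intro h
        have h2 : x = (y : c0.Quotient) := h
        rw [h2]
        exact d.refl _
    have hgt : pullCon c0 d > c0 := lt_of_le_of_ne hle (Ne.symm hne)
    have hnotC : pullCon c0 d ∉ C := fun hmem => hmax _ hmem hgt
    rw [hC, Set.mem_setOf_eq] at hnotC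
    push_neg at hnotC
    obtain ⟨S, hS⟩ := hnotC
    refine ⟨S.image (⇑c0.mk'), ?_⟩
    intro q
    refine Con.induction_on q fun x => ?_
    obtain ⟨w, hw, hxw⟩ := hS x
    refine ⟨(w : c0.Quotient), ?_, hxw⟩
    have himg : (c0.mk') '' (S : Set M) = ((S.image (⇑c0.mk') : Finset c0.Quotient) : Set c0.Quotient) := by
      rw [Finset.coe_image]
    have hw2 : c0.mk' w ∈ (Submonoid.closure ((S : Set M))).map c0.mk' :=
      Submonoid.mem_map_of_mem _ hw
    rw [MonoidHom.map_mclosure, himg] at hw2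
    exact hw2
  -- apply the key lemma
  obtain ⟨SS, hSS⟩ := key_lemma haccT hq
  -- contradict c0 ∈ C
  apply hc0 (SS.image (fun q => Quotient.out q))
  intro x
  have hx : (x : c0.Quotient) ∈ Submonoid.closure (SS : Set c0.Quotient) := by
    rw [hSS]; exact Submonoid.mem_top _
  have himg : (c0.mk') '' ((SS.image fun q => Quotient.out q : Finset M) : Set M)
      = (SS : Set c0.Quotient) := by
    erw [Finset.coe_image, ← Set.image_comp]
    have : (⇑c0.mk' ∘ fun q => Quotient.out q) = id := by
      funext q
      exact Quotient.out_eq q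
    rw [this]; exact Set.image_id _
  have hx2 : (x : c0.Quotient) ∈ (Submonoid.closure
      ((SS.image fun q => Quotient.out q : Finset M) : Set M)).map c0.mk' := by
    rw [MonoidHom.map_mclosure, himg]
    exact hx
  obtain ⟨w, hw, hweq⟩ := Submonoid.mem_map.1 hx2
  refine ⟨w, hw, ?_⟩
  have : (w : c0.Quotient) = (x : c0.Quotient) := hweq
  exact (Con.eq c0).1 this.symm

end Criminal


section Dir1

variable {A : Type*} [CommMonoid A]

/-- From a finite generating set we get ACC on congruences. -/
theorem acc_of_fg (S : Finset A) (hS : Submonoid.closure (S : Set A) = ⊤) :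
    ∀ c : ℕ → Con A, Monotone c → ∃ N, ∀ m, N ≤ m → c m = c N := by
  classical
  intro c hc
  set ι := {x : A // x ∈ S}
  -- the "evaluation" map from the free commutative monoid
  set φ : (ι →₀ ℕ) → A := fun g => g.prod fun i n => (i : A) ^ n with hφ
  have φ_add : ∀ x y : ι →₀ ℕ, φ (x + y) = φ x * φ y := by
    intro x y
    simpa [φ] using Finsupp.prod_add_index' (f := x) (g := y)
      (h := fun (i : ι) n => (i : A) ^ n) (fun a => pow_zero _) (fun a b₁ b₂ => pow_add _ _ _)
  have φ_surj : ∀ a : A, ∃ g : ι →₀ ℕ, φ g = a := by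
    intro a
    have ha : a ∈ Submonoid.closure (S : Set A) := hS ▸ Submonoid.mem_top a
    induction ha using Submonoid.closure_induction with
    | mem x hx =>
      refine ⟨Finsupp.single ⟨x, hx⟩ 1, ?_⟩
      rw [hφ]
      exact (Finsupp.prod_single_index (h := fun (i : ι) n => (i : A) ^ n)
        (a := ⟨x, hx⟩) (b := 1) (pow_zero _)).trans (pow_one x)
    | one => exact ⟨0, by rw [hφ]; exact Finsupp.prod_zero_index⟩
    | mul x y _ _ ihx ihy =>
      obtain ⟨gx, hgx⟩ := ihx
      obtain ⟨gy, hgy⟩ := ihy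
      exact ⟨gx + gy, by rw [φ_add, hgx, hgy]⟩
  -- pull back congruences to the free commutative monoid
  set e : ℕ → AddCon (ι →₀ ℕ) := fun n =>
    { r := fun x y => c n (φ x) (φ y)
      iseqv := ⟨fun x => (c n).refl _, fun h => (c n).symm h, fun h h' => (c n).trans h h'⟩
      add' := fun {w x y z} h h' => by
        simpa [φ_add] using (c n).mul h h' } with he
  have he_mono : ∀ {m n}, m ≤ n → ∀ x y, (e m) x y → (e n) x y := by
    intro m n hmn x y hxy
    exact hc hmn hxy
  -- the binomial ideal associated to a congruence
  set R := AddMonoidAlgebra ℤ (ι →₀ ℕ) with hR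
  haveI : IsNoetherianRing R := inferInstanceAs (IsNoetherianRing (MvPolynomial ι ℤ))
  set I : AddCon (ι →₀ ℕ) → Ideal R := fun d =>
    Ideal.span {p : R | ∃ a b, d a b ∧ p = AddMonoidAlgebra.single a 1 - AddMonoidAlgebra.single b 1} with hI
  -- the key reflection lemma
  have reflect : ∀ d : AddCon (ι →₀ ℕ), ∀ a b, (AddMonoidAlgebra.single a 1 - AddMonoidAlgebra.single b 1 : R) ∈ I d → d a b := by
    intro d a b hmem
    set π := AddMonoidAlgebra.mapDomainRingHom ℤ d.mk' with hπ
    have hker : I d ≤ RingHom.ker π := by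
      rw [hI, Ideal.span_le]
      rintro p ⟨x, y, hxy, rfl⟩
      have hs : ∀ z : ι →₀ ℕ, π (AddMonoidAlgebra.single z (1 : ℤ)) = AddMonoidAlgebra.single (d.mk' z) 1 :=
        fun z => AddMonoidAlgebra.mapDomain_single
      have hxy' : d.mk' x = d.mk' y := (AddCon.eq d).2 hxy
      have : π (AddMonoidAlgebra.single x 1 - AddMonoidAlgebra.single y 1) = 0 := by
        rw [map_sub, hs, hs, hxy', sub_self]
      simpa [RingHom.mem_ker] using this
    have hs : ∀ z : ι →₀ ℕ, π (AddMonoidAlgebra.single z (1 : ℤ)) = AddMonoidAlgebra.single (d.mk' z) 1 :=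
      fun z => AddMonoidAlgebra.mapDomain_single
    have h0 : π (AddMonoidAlgebra.single a 1 - AddMonoidAlgebra.single b 1) = 0 := hker hmem
    rw [map_sub, hs, hs, sub_eq_zero] at h0
    have : AddMonoidAlgebra.single (d.mk' a) (1 : ℤ) = AddMonoidAlgebra.single (d.mk' b) 1 := h0
    have : d.mk' a = d.mk' b := AddMonoidAlgebra.single_left_injective (one_ne_zero) this
    exact (AddCon.eq d).1 this
  -- the chain of ideals stabilizes
  have Imono : Monotone fun n => I (e n) := by
    intro m n hmn
    apply Ideal.span_mono
    rintro p ⟨a, b, hab, rfl⟩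
    exact ⟨a, b, he_mono hmn a b hab, rfl⟩
  obtain ⟨N, hN⟩ := monotone_stabilizes_iff_noetherian.2 ‹IsNoetherianRing R›
    ⟨fun n => I (e n), Imono⟩
  refine ⟨N, fun m hm => ?_⟩
  refine le_antisymm ?_ (hc hm)
  rw [Con.le_def]
  intro a b hab
  obtain ⟨x, hx⟩ := φ_surj a
  obtain ⟨y, hy⟩ := φ_surj b
  have hexy : (e m) x y := by
    show c m (φ x) (φ y)
    rw [hx, hy]; exact hab
  have hmem : (AddMonoidAlgebra.single x 1 - AddMonoidAlgebra.single y 1 : R) ∈ I (e m) :=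
    Ideal.subset_span ⟨x, y, hexy, rfl⟩
  have hIeq : I (e m) = I (e N) := (hN m hm).symm
  have : (e N) x y := reflect (e N) x y (hIeq ▸ hmem)
  have : c N (φ x) (φ y) := this
  rwa [hx, hy] at this

end Dir1


end MonoidFGACC

/-- A commutative pointed monoid is finitely generated (every nonzero element is a finite,
possibly empty, product of elements of a fixed finite subset) if and only if its
congruences satisfy the ascending chain condition. -/
theorem monoid_fg_iff_acc_on_congruences {A : Type*} [CommMonoidWithZero A] :
    (∃ X : Finset A, ∀ a : A, a ≠ 0 → a ∈ Submonoid.closure (X : Set A)) ↔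
    (∀ c : ℕ → Con A, Monotone c → ∃ N, ∀ m, N ≤ m → c m = c N) := by
  classical
  constructor
  · rintro ⟨X, hX⟩
    refine MonoidFGACC.acc_of_fg (insert 0 X) ?_
    rw [Submonoid.eq_top_iff']
    intro a
    by_cases ha : a = 0
    · exact Submonoid.subset_closure (Finset.mem_coe.2 (ha ▸ Finset.mem_insert_self _ _))
    · refine Submonoid.closure_mono ?_ (hX a ha)
      intro z hz
      exact Finset.mem_coe.2 (Finset.mem_insert_of_mem (Finset.mem_coe.1 hz))
  · intro hacc
    obtain ⟨S, hS⟩ := MonoidFGACC.dir2 hacc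
    exact ⟨S, fun a _ => hS ▸ Submonoid.mem_top a⟩
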